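/- Assume: (i) for every sequence (δ_n) of positive reals converging to 0 and every ε > 0, P({ω : sup_{G ∈ H, ‖G − G₀‖ ≤ δ_n} √n·‖𝒳_n(ω)(G) − 𝒳(G) − 𝒳_n(ω)(G₀)‖ > ε}) → 0 as n → ∞; (ii) there exist c ≥ 0 and δ̄ > 0 such that ‖𝒳(G) − L(G − G₀)‖ ≤ c·‖G − G₀‖² for every G with ‖G − G₀‖ ≤ δ̄; (iii) for every ε > 0, P({ω : n^{1/4}·‖Ĝ_n(ω) − G₀‖ > ε}) → 0 as n → ∞. Then for every ε > 0, P({ω : √n·‖𝒳_n(ω)(Ĝ_n(ω)) − 𝒳_n(ω)(G₀) − L(Ĝ_n(ω) − G₀)‖ > ε}) → 0 as n → ∞; that is, √n[𝒳_n(Ĝ_n) − 𝒳_n(G₀)] = √n·L[Ĝ_n − G₀] + o_P(1). -/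

import Mathlib

open MeasureTheory Filter

set_option maxHeartbeats 1000000 in
/-- Linearization of the empirical functional (Result `rslt:X_linear`): under stochastic
equicontinuity, a quadratic remainder bound for the pathwise derivative `L` of `𝒳` at `G₀`,
and an `o_P(n^{-1/4})` convergence rate of the estimator `Ĝ_n`, one has
`√n[𝒳_n(Ĝ_n) − 𝒳_n(G₀)] = √n·L[Ĝ_n − G₀] + o_P(1)`. -/
theorem empirical_functional_linearization
    {Ω : Type*} {mΩ : MeasurableSpace Ω} (P : Measure Ω) [IsProbabilityMeasure P]
    {H : Type*} [NormedAddCommGroup H] [NormedSpace ℝ H]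
    [MeasurableSpace H] [BorelSpace H]
    (G₀ : H) (d : ℕ) (hd : 0 < d)
    (Xn : ℕ → Ω → H → EuclideanSpace ℝ (Fin d))
    (X : H → EuclideanSpace ℝ (Fin d)) (hX0 : X G₀ = 0)
    (L : H →L[ℝ] EuclideanSpace ℝ (Fin d))
    (Ghat : ℕ → Ω → H) (hGhat_meas : ∀ n, Measurable (Ghat n))
    (hSE : ∀ δ : ℕ → ℝ, (∀ n, 0 < δ n) → Tendsto δ atTop (nhds 0) →
      ∀ ε > (0 : ℝ), Tendsto
        (fun (n : ℕ) => P {ω | ∃ G : H, ‖G - G₀‖ ≤ δ n ∧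
          ε < Real.sqrt n * ‖Xn n ω G - X G - Xn n ω G₀‖})
        atTop (nhds 0))
    (hDeriv : ∃ c : ℝ, 0 ≤ c ∧ ∃ δbar : ℝ, 0 < δbar ∧ ∀ G : H, ‖G - G₀‖ ≤ δbar →
      ‖X G - L (G - G₀)‖ ≤ c * ‖G - G₀‖ ^ 2)
    (hRate : ∀ ε > (0 : ℝ), Tendsto
      (fun (n : ℕ) => P {ω | ε < (n : ℝ) ^ ((1 : ℝ) / 4) * ‖Ghat n ω - G₀‖})
      atTop (nhds 0)) :
    ∀ ε > (0 : ℝ), Tendsto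
      (fun (n : ℕ) => P {ω | ε < Real.sqrt n *
        ‖Xn n ω (Ghat n ω) - Xn n ω G₀ - L (Ghat n ω - G₀)‖})
      atTop (nhds 0) := by
  intro ε hε
  obtain ⟨c, hc, δbar, hδbar, hquad⟩ := hDeriv
  set η : ℝ := min 1 (Real.sqrt (ε / (2 * (c + 1)))) with hηdef
  have hη : 0 < η := lt_min one_pos (Real.sqrt_pos.mpr (by positivity))
  set δ : ℕ → ℝ := fun n => ((n : ℝ) + 1) ^ (-(1/8) : ℝ) with hδdef
  have hδpos : ∀ n, 0 < δ n := fun n => Real.rpow_pos_of_pos (by positivity) _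
  have hδ0 : Tendsto δ atTop (nhds 0) := by
    have h1 : Tendsto (fun x : ℝ => x ^ (-(1/8) : ℝ)) atTop (nhds 0) :=
      tendsto_rpow_neg_atTop (by norm_num)
    have h2 : Tendsto (fun n : ℕ => (n : ℝ) + 1) atTop atTop :=
      tendsto_atTop_add_const_right _ 1 tendsto_natCast_atTop_atTop
    exact h1.comp h2
  have hA := hRate η hη
  have hB := hSE δ hδpos hδ0 (ε/2) (by positivity)
  have hsum : Tendsto (fun n : ℕ => P {ω | η < (n:ℝ) ^ ((1:ℝ)/4) * ‖Ghat n ω - G₀‖}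
      + P {ω | ∃ G : H, ‖G - G₀‖ ≤ δ n ∧ ε/2 < Real.sqrt n * ‖Xn n ω G - X G - Xn n ω G₀‖})
      atTop (nhds 0) := by
    simpa using hA.add hB
  have hsmall : ∀ᶠ n : ℕ in atTop, (n:ℝ) ^ (-(1/4) : ℝ) ≤ δbar := by
    have h3 : Tendsto (fun n : ℕ => (n:ℝ) ^ (-(1/4):ℝ)) atTop (nhds 0) :=
      (tendsto_rpow_neg_atTop (by norm_num)).comp tendsto_natCast_atTop_atTop
    filter_upwards [h3.eventually (gt_mem_nhds hδbar)] with n h using le_of_lt h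
  have hincl : ∀ᶠ n : ℕ in atTop,
      {ω | ε < Real.sqrt n * ‖Xn n ω (Ghat n ω) - Xn n ω G₀ - L (Ghat n ω - G₀)‖}
      ⊆ {ω | η < (n:ℝ) ^ ((1:ℝ)/4) * ‖Ghat n ω - G₀‖}
        ∪ {ω | ∃ G : H, ‖G - G₀‖ ≤ δ n ∧ ε/2 < Real.sqrt n * ‖Xn n ω G - X G - Xn n ω G₀‖} := by
    filter_upwards [hsmall, eventually_ge_atTop 2] with n hnδ hn2
    intro ω hω
    simp only [Set.mem_setOf_eq] at hω
    by_contra hcon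
    simp only [Set.mem_union, Set.mem_setOf_eq, not_or, not_exists, not_and, not_lt] at hcon
    obtain ⟨h1, h2⟩ := hcon
    have hn1 : (1:ℝ) ≤ (n:ℝ) := by exact_mod_cast le_trans one_le_two hn2
    have hn0 : (0:ℝ) < (n:ℝ) := by linarith
    set t := (n:ℝ) ^ ((1:ℝ)/4) with ht
    have htpos : 0 < t := Real.rpow_pos_of_pos hn0 _
    set r := ‖Ghat n ω - G₀‖ with hr
    have hrnn : 0 ≤ r := norm_nonneg _
    have hη1 : η ≤ 1 := min_le_left _ _
    have hinv : (n:ℝ) ^ (-(1/4):ℝ) = t⁻¹ := by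
      rw [ht, ← Real.rpow_neg hn0.le]
    have hrinv : r ≤ (n:ℝ) ^ (-(1/4):ℝ) := by
      rw [hinv]
      have h1' : t * r ≤ 1 := h1.trans hη1
      calc r = (t*r)/t := by field_simp
        _ ≤ 1/t := by gcongr
        _ = t⁻¹ := one_div t
    have hrδbar : r ≤ δbar := hrinv.trans hnδ
    have hrδ : r ≤ δ n := by
      refine hrinv.trans ?_
      show (n:ℝ)^(-(1/4):ℝ) ≤ ((n:ℝ)+1)^(-(1/8):ℝ)
      rw [Real.rpow_neg hn0.le, Real.rpow_neg (by positivity)]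
      refine inv_anti₀ (Real.rpow_pos_of_pos (by positivity) _) ?_
      have h4 : ((n:ℝ))^((1:ℝ)/4) = (((n:ℝ))^(2:ℕ)) ^ ((1:ℝ)/8) := by
        rw [← Real.rpow_natCast ((n:ℝ)) 2, ← Real.rpow_mul hn0.le]
        norm_num
      rw [h4]
      refine Real.rpow_le_rpow (by positivity) ?_ (by norm_num)
      have h2n : (2:ℝ) ≤ (n:ℝ) := by exact_mod_cast hn2
      nlinarith
    have hterm1 : Real.sqrt n * ‖Xn n ω (Ghat n ω) - X (Ghat n ω) - Xn n ω G₀‖ ≤ ε/2 :=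
      h2 _ hrδ
    have hquad' : ‖X (Ghat n ω) - L (Ghat n ω - G₀)‖ ≤ c * r ^ 2 := hquad _ hrδbar
    have hsqrt : Real.sqrt n = t ^ 2 := by
      rw [ht, ← Real.rpow_natCast ((n:ℝ) ^ ((1:ℝ)/4)) 2, ← Real.rpow_mul hn0.le,
        Real.sqrt_eq_rpow]
      norm_num
    have htr : t * r ≤ η := h1
    have hterm2 : Real.sqrt n * ‖X (Ghat n ω) - L (Ghat n ω - G₀)‖ ≤ ε/2 := by
      have hηsq : η ^ 2 ≤ ε / (2*(c+1)) := by
        have hm := min_le_right 1 (Real.sqrt (ε / (2 * (c + 1))))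
        have hs := Real.sq_sqrt (le_of_lt (show (0:ℝ) < ε/(2*(c+1)) by positivity))
        nlinarith [hη.le]
      calc Real.sqrt n * ‖X (Ghat n ω) - L (Ghat n ω - G₀)‖
          ≤ t^2 * (c * r^2) := by
            rw [hsqrt]
            exact mul_le_mul_of_nonneg_left hquad' (by positivity)
        _ = c * (t*r)^2 := by ring
        _ ≤ c * η^2 := by
            have h0 : 0 ≤ t*r := mul_nonneg htpos.le hrnn
            exact mul_le_mul_of_nonneg_left (pow_le_pow_left₀ h0 htr 2) hc
        _ ≤ c * (ε/(2*(c+1))) := mul_le_mul_of_nonneg_left hηsq hc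
        _ ≤ (c+1) * (ε/(2*(c+1))) := by
            have : (0:ℝ) ≤ ε/(2*(c+1)) := by positivity
            nlinarith
        _ = ε/2 := by field_simp
    have hdecomp : Xn n ω (Ghat n ω) - Xn n ω G₀ - L (Ghat n ω - G₀)
        = (Xn n ω (Ghat n ω) - X (Ghat n ω) - Xn n ω G₀)
          + (X (Ghat n ω) - L (Ghat n ω - G₀)) := by abel
    have hnorm : ‖Xn n ω (Ghat n ω) - Xn n ω G₀ - L (Ghat n ω - G₀)‖
        ≤ ‖Xn n ω (Ghat n ω) - X (Ghat n ω) - Xn n ω G₀‖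
          + ‖X (Ghat n ω) - L (Ghat n ω - G₀)‖ := by
      rw [hdecomp]; exact norm_add_le _ _
    have hsq0 : (0:ℝ) ≤ Real.sqrt n := Real.sqrt_nonneg _
    have hfin : Real.sqrt n * ‖Xn n ω (Ghat n ω) - Xn n ω G₀ - L (Ghat n ω - G₀)‖ ≤ ε := by
      calc Real.sqrt n * ‖Xn n ω (Ghat n ω) - Xn n ω G₀ - L (Ghat n ω - G₀)‖
          ≤ Real.sqrt n * (‖Xn n ω (Ghat n ω) - X (Ghat n ω) - Xn n ω G₀‖
            + ‖X (Ghat n ω) - L (Ghat n ω - G₀)‖) := mul_le_mul_of_nonneg_left hnorm hsq0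
        _ = Real.sqrt n * ‖Xn n ω (Ghat n ω) - X (Ghat n ω) - Xn n ω G₀‖
            + Real.sqrt n * ‖X (Ghat n ω) - L (Ghat n ω - G₀)‖ := mul_add _ _ _
        _ ≤ ε/2 + ε/2 := add_le_add hterm1 hterm2
        _ = ε := by ring
    exact absurd hω (not_lt.mpr hfin)
  refine tendsto_of_tendsto_of_tendsto_of_le_of_le' tendsto_const_nhds hsum
    (Eventually.of_forall fun n => zero_le) ?_
  filter_upwards [hincl] with n hn
  exact (measure_mono hn).trans (measure_union_le _ _)
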